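/- Let n, s, m be natural numbers with n = s + m, m ≥ 1, let A : ℝ^{2n} → ℝ^{2n} be an invertible linear map and let R > 0. Then lim_{a→0⁺} ∫_{{x ∈ ℝ^{2n} : ‖Ax‖ < R}} a^{−m} ‖Ax‖^{−2s} e^{−‖Ax‖²/(2a)} dλ(x) = vol(S^{2n−1}) · 2^{m−1} · (m−1)! / |det A|. -/

import Mathlib

open MeasureTheory Filter

/-- The volume of the unit sphere `S^{2n-1} ⊂ ℝ^{2n}`. -/
noncomputable def volSphere (n : ℕ) : ℝ := 2 * Real.pi ^ n / (Nat.factorial (n - 1))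

/-- The limit from Proposition 5.4(1). -/
theorem stmt_2 (n s m : ℕ) (hnm : n = s + m) (hm : 1 ≤ m)
    (A : EuclideanSpace ℝ (Fin (2 * n)) ≃ₗ[ℝ] EuclideanSpace ℝ (Fin (2 * n)))
    (R : ℝ) (hR : 0 < R) :
    Tendsto (fun a : ℝ =>
        ∫ x in {x : EuclideanSpace ℝ (Fin (2 * n)) | ‖A x‖ < R},
          (a ^ m)⁻¹ * (‖A x‖ ^ (2 * s))⁻¹ * Real.exp (-‖A x‖ ^ 2 / (2 * a)))
      (nhdsWithin 0 (Set.Ioi 0))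
      (nhds (volSphere n * 2 ^ (m - 1) * (Nat.factorial (m - 1)) /
        |LinearMap.det (A : EuclideanSpace ℝ (Fin (2 * n)) →ₗ[ℝ] EuclideanSpace ℝ (Fin (2 * n)))|)) := by
  have hn : 1 ≤ n := by omega
  haveI : Nonempty (Fin (2 * n)) := ⟨⟨0, by omega⟩⟩
  haveI : Nontrivial (EuclideanSpace ℝ (Fin (2 * n))) := inferInstance
  have hA : Continuous (A : EuclideanSpace ℝ (Fin (2 * n)) → EuclideanSpace ℝ (Fin (2 * n))) :=
    (A : EuclideanSpace ℝ (Fin (2 * n)) →ₗ[ℝ] EuclideanSpace ℝ (Fin (2 * n))).continuous_of_finiteDimensional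
  set D := |LinearMap.det (A : EuclideanSpace ℝ (Fin (2 * n)) →ₗ[ℝ] EuclideanSpace ℝ (Fin (2 * n)))| with hDdef
  have hdet : LinearMap.det (A : EuclideanSpace ℝ (Fin (2 * n)) →ₗ[ℝ] EuclideanSpace ℝ (Fin (2 * n))) ≠ 0 :=
    A.isUnit_det'.ne_zero
  have hD : 0 < D := abs_pos.mpr hdet
  set volB : ℝ := ((volume : Measure (EuclideanSpace ℝ (Fin (2 * n)))) (Metric.ball 0 1)).toReal with hvolBdef
  set g : ℝ → ℝ := fun t => t ^ (2 * m - 1) * Real.exp (-t ^ 2) with hg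
  set C : ℝ := D⁻¹ * ((2 * n : ℕ) * volB) * 2 ^ m with hC
  -- key pointwise identity
  have hkey : ∀ a : ℝ, a ∈ Set.Ioi (0 : ℝ) →
      (∫ x in {x : EuclideanSpace ℝ (Fin (2 * n)) | ‖A x‖ < R},
          (a ^ m)⁻¹ * (‖A x‖ ^ (2 * s))⁻¹ * Real.exp (-‖A x‖ ^ 2 / (2 * a)))
        = C * ∫ t in (0 : ℝ)..(R / Real.sqrt (2 * a)), g t := by
    intro a ha
    rw [Set.mem_Ioi] at ha
    have h2a : (0 : ℝ) < 2 * a := by linarith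
    set c : ℝ := Real.sqrt (2 * a) with hcdef
    have hc : 0 < c := Real.sqrt_pos.mpr h2a
    have hc2 : c ^ 2 = 2 * a := Real.sq_sqrt h2a.le
    set f : ℝ → ℝ := fun r => (a ^ m)⁻¹ * (r ^ (2 * s))⁻¹ * Real.exp (-r ^ 2 / (2 * a)) with hfdef
    have hfm : Measurable f := by
      apply Measurable.mul
      apply Measurable.mul
      · exact measurable_const
      · exact (measurable_id.pow_const _).inv
      · exact (((measurable_id.pow_const 2).neg).div_const _).exp
    set F : ℝ → ℝ := (Set.Iio R).indicator f with hF
    set h : ℝ → ℝ := fun y => (a ^ m)⁻¹ * y ^ (2 * m - 1) * Real.exp (-y ^ 2 / (2 * a)) with hh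
    have hSmeas : MeasurableSet {x : EuclideanSpace ℝ (Fin (2 * n)) | ‖A x‖ < R} :=
      (hA.norm.measurable) measurableSet_Iio
    calc
      (∫ x in {x : EuclideanSpace ℝ (Fin (2 * n)) | ‖A x‖ < R},
          (a ^ m)⁻¹ * (‖A x‖ ^ (2 * s))⁻¹ * Real.exp (-‖A x‖ ^ 2 / (2 * a)))
          = ∫ x : EuclideanSpace ℝ (Fin (2 * n)), F ‖A x‖ := by
            rw [← integral_indicator hSmeas]
            rfl
      _ = ∫ y : EuclideanSpace ℝ (Fin (2 * n)), F ‖y‖ ∂(Measure.map A volume) :=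
            (integral_map hA.measurable.aemeasurable
              ((hfm.indicator measurableSet_Iio).comp measurable_norm).aestronglyMeasurable).symm
      _ = D⁻¹ * ∫ y : EuclideanSpace ℝ (Fin (2 * n)), F ‖y‖ := by
            have hmap : Measure.map (A : EuclideanSpace ℝ (Fin (2 * n)) → EuclideanSpace ℝ (Fin (2 * n))) volume
                = ENNReal.ofReal |(LinearMap.det (A : EuclideanSpace ℝ (Fin (2 * n)) →ₗ[ℝ] EuclideanSpace ℝ (Fin (2 * n))))⁻¹| • volume := by
              have := Measure.map_linearMap_addHaar_eq_smul_addHaar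
                (volume : Measure (EuclideanSpace ℝ (Fin (2 * n)))) hdet
              simpa using this
            rw [hmap, integral_smul_measure, ENNReal.toReal_ofReal (abs_nonneg _),
              abs_inv, smul_eq_mul]
      _ = D⁻¹ * ((2 * n) • volB • ∫ y in Set.Ioi (0 : ℝ), y ^ (2 * n - 1) • F y) := by
            rw [integral_fun_norm_addHaar (volume : Measure (EuclideanSpace ℝ (Fin (2 * n)))) F,
              finrank_euclideanSpace_fin]
            rfl
      _ = D⁻¹ * ((2 * n : ℕ) * (volB * ∫ y in Set.Ioi (0 : ℝ), y ^ (2 * n - 1) • F y)) := by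
            rw [nsmul_eq_mul, smul_eq_mul]
      _ = D⁻¹ * ((2 * n : ℕ) * (volB * (2 ^ m * ∫ t in (0 : ℝ)..(R / c), g t))) := by
            congr 2
            have step4 : (∫ y in Set.Ioi (0 : ℝ), y ^ (2 * n - 1) • F y)
                = ∫ y in Set.Ioo (0 : ℝ) R, y ^ (2 * n - 1) * f y := by
              rw [show (fun y : ℝ => y ^ (2 * n - 1) • F y)
                  = fun y => (Set.Iio R).indicator (fun y => y ^ (2 * n - 1) * f y) y from
                funext fun y => by
                  by_cases hy : y < R <;>
                    simp [hF, Set.indicator_apply, hy, smul_eq_mul]]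
              rw [setIntegral_indicator measurableSet_Iio, Set.Ioi_inter_Iio]
            have step5 : (∫ y in Set.Ioo (0 : ℝ) R, y ^ (2 * n - 1) * f y)
                = ∫ y in Set.Ioo (0 : ℝ) R, h y := by
              refine setIntegral_congr_fun measurableSet_Ioo fun y hy => ?_
              have hy0 : (0 : ℝ) < y := hy.1
              have hpow : y ^ (2 * n - 1) = y ^ (2 * s) * y ^ (2 * m - 1) := by
                rw [← pow_add]; congr 1; omega
              have hys : (y : ℝ) ^ (2 * s) ≠ 0 := pow_ne_zero _ hy0.ne'
              simp only [hfdef, hh, hpow]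
              field_simp
            have step6 : (∫ y in Set.Ioo (0 : ℝ) R, h y) = ∫ y in (0 : ℝ)..R, h y := by
              rw [intervalIntegral.integral_of_le hR.le, integral_Ioc_eq_integral_Ioo]
            have step7 : (∫ y in (0 : ℝ)..R, h y) = 2 ^ m * ∫ t in (0 : ℝ)..(R / c), g t := by
              have hsub : (c • ∫ t in (0 : ℝ)..(R / c), h (t * c)) = ∫ y in (0 : ℝ)..R, h y := by
                have := intervalIntegral.smul_integral_comp_mul_right
                  (a := 0) (b := R / c) h c
                rwa [zero_mul, div_mul_cancel₀ _ hc.ne'] at this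
              have hfun : ∀ t : ℝ, c * h (t * c) = 2 ^ m * g t := by
                intro t
                have hexp : -(t ^ 2 * c ^ 2) / (2 * a) = -t ^ 2 := by
                  rw [hc2]; field_simp
                have hkey2 : c * c ^ (2 * m - 1) = 2 ^ m * a ^ m := by
                  have hcc : c * c ^ (2 * m - 1) = c ^ (2 * m) := by
                    rw [← pow_succ']
                    congr 1
                    omega
                  rw [hcc, pow_mul, hc2, mul_pow]
                have ham : (a : ℝ) ^ m ≠ 0 := pow_ne_zero _ ha.ne'
                simp only [hh, hg, mul_pow, hexp]
                calc c * ((a ^ m)⁻¹ * (t ^ (2 * m - 1) * c ^ (2 * m - 1)) * Real.exp (-t ^ 2))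
                    = (c * c ^ (2 * m - 1)) * (a ^ m)⁻¹ * (t ^ (2 * m - 1) * Real.exp (-t ^ 2)) := by
                      ring
                  _ = 2 ^ m * a ^ m * (a ^ m)⁻¹ * (t ^ (2 * m - 1) * Real.exp (-t ^ 2)) := by
                      rw [hkey2]
                  _ = 2 ^ m * (t ^ (2 * m - 1) * Real.exp (-t ^ 2)) := by
                      rw [mul_assoc ((2 : ℝ) ^ m), mul_inv_cancel₀ ham, mul_one]
              rw [← hsub, smul_eq_mul, ← intervalIntegral.integral_const_mul]
              · simp_rw [hfun]
                exact intervalIntegral.integral_const_mul _ _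
            rw [step4, step5, step6, step7]
      _ = C * ∫ t in (0 : ℝ)..(R / c), g t := by rw [hC]; ring
  -- integrability of g on Ioi 0
  have hgint : IntegrableOn g (Set.Ioi (0 : ℝ)) := by
    have h1 : (-1 : ℝ) < ((2 * m - 1 : ℕ) : ℝ) :=
      lt_of_lt_of_le (by norm_num) (Nat.cast_nonneg _)
    have := integrableOn_rpow_mul_exp_neg_rpow h1 (by norm_num : (0 : ℝ) < 2)
    refine this.congr_fun (fun x _ => ?_) measurableSet_Ioi
    dsimp only
    rw [Real.rpow_natCast, Real.rpow_two]
  -- the endpoint tends to infinity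
  have h1 : Tendsto (fun a : ℝ => R / Real.sqrt (2 * a)) (nhdsWithin 0 (Set.Ioi 0)) atTop := by
    have hs : Tendsto (fun a : ℝ => Real.sqrt (2 * a)) (nhdsWithin 0 (Set.Ioi 0))
        (nhdsWithin 0 (Set.Ioi 0)) := by
      rw [tendsto_nhdsWithin_iff]
      constructor
      · have hcont : Tendsto (fun a : ℝ => Real.sqrt (2 * a)) (nhds 0) (nhds 0) := by
          have hsq : Continuous fun a : ℝ => Real.sqrt (2 * a) :=
            Real.continuous_sqrt.comp (continuous_const.mul continuous_id)
          have := hsq.tendsto 0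
          simpa using this
        exact hcont.mono_left nhdsWithin_le_nhds
      · filter_upwards [self_mem_nhdsWithin] with a ha
        exact Real.sqrt_pos.mpr (by linarith [Set.mem_Ioi.mp ha])
    have h2 := tendsto_inv_nhdsGT_zero.comp hs
    have h3 := h2.const_mul_atTop hR
    simpa [div_eq_mul_inv, Function.comp] using h3
  have hmain := intervalIntegral_tendsto_integral_Ioi 0 hgint h1
  -- value of the limit integral
  have hIoi : (∫ t in Set.Ioi (0 : ℝ), g t) = (Nat.factorial (m - 1) : ℝ) / 2 := by
    have hcongr : (∫ t in Set.Ioi (0 : ℝ), g t)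
        = ∫ x in Set.Ioi (0 : ℝ), x ^ ((2 * m - 1 : ℕ) : ℝ) * Real.exp (-x ^ (2 : ℝ)) := by
      refine setIntegral_congr_fun measurableSet_Ioi fun x _ => ?_
      rw [Real.rpow_natCast, Real.rpow_two]
    rw [hcongr, integral_rpow_mul_exp_neg_rpow (by norm_num)
      (lt_of_lt_of_le (by norm_num) (Nat.cast_nonneg _))]
    have harg : (((2 * m - 1 : ℕ) : ℝ) + 1) / 2 = (m : ℝ) := by
      have hcast : ((2 * m - 1 : ℕ) : ℝ) = 2 * m - 1 := by
        push_cast [Nat.cast_sub (by omega : 1 ≤ 2 * m)]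
        ring
      rw [hcast]; ring
    have hGamma : Real.Gamma ((m : ℝ)) = (Nat.factorial (m - 1) : ℝ) := by
      have hm' : (m : ℝ) = ((m - 1 : ℕ) : ℝ) + 1 := by
        push_cast [Nat.cast_sub hm]; ring
      rw [hm', Real.Gamma_nat_eq_factorial]
    rw [harg, hGamma]; ring
  -- value of volB
  have hvolB : volB = Real.pi ^ n / (Nat.factorial n : ℝ) := by
    rw [hvolBdef, EuclideanSpace.volume_ball (Fin (2 * n)) 0 1]
    simp only [ENNReal.ofReal_one, one_pow, one_mul, Fintype.card_fin]
    rw [ENNReal.toReal_ofReal (by positivity)]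
    have h2 : Real.sqrt Real.pi ^ (2 * n) = Real.pi ^ n := by
      rw [pow_mul, Real.sq_sqrt Real.pi_pos.le]
    have h3 : ((2 * n : ℕ) : ℝ) / 2 + 1 = (n : ℝ) + 1 := by push_cast; ring
    rw [h2, h3, Real.Gamma_nat_eq_factorial]
  -- final value equality
  have hfinal : C * ((Nat.factorial (m - 1) : ℝ) / 2)
      = volSphere n * 2 ^ (m - 1) * (Nat.factorial (m - 1)) / D := by
    have e1 : ((Nat.factorial n : ℕ) : ℝ) = (n : ℝ) * (Nat.factorial (n - 1) : ℝ) := by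
      exact_mod_cast (Nat.mul_factorial_pred (by omega : n ≠ 0)).symm
    have e2 : (2 : ℝ) ^ m = 2 * 2 ^ (m - 1) := by
      rw [← pow_succ']; congr 1; omega
    have hfn : (Nat.factorial (n - 1) : ℝ) ≠ 0 := Nat.cast_ne_zero.mpr (Nat.factorial_ne_zero _)
    have hnn : (n : ℝ) ≠ 0 := Nat.cast_ne_zero.mpr (by omega)
    rw [hC, hvolB, volSphere, e1, e2]
    push_cast
    field_simp
  rw [← hfinal, ← hIoi]
  exact Tendsto.congr'
    (by filter_upwards [self_mem_nhdsWithin] with a ha; exact (hkey a ha).symm)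
    (hmain.const_mul C)
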